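/- Every finite simple graph with maximum degree Δ has linear list vertex arboricity at most ⌈(Δ+1)/2⌉; that is, if L is a list assignment with |L(v)| ≥ ⌈(Δ+1)/2⌉ for every v ∈ V(G), then there is a coloring φ with φ(v) ∈ L(v) for every v such that every color class induces a forest with maximum degree at most two. -/

import Mathlib

open SimpleGraph

universe u

/-- `H` is a cover of `G` with `κ` parts: every edge of `H` joins distinct fibres
`X_u`, `X_v` with `uv ∈ E(G)` (in particular each fibre is independent), and the
edges between two fibres form a (possibly empty) matching. -/
def IsCover {V : Type u} (κ : ℕ) (G : SimpleGraph V) (H : SimpleGraph (V × Fin κ)) : Prop :=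
  (∀ (u v : V) (p q : Fin κ), H.Adj (u, p) (v, q) → G.Adj u v) ∧
  (∀ (u v : V) (p q q' : Fin κ), H.Adj (u, p) (v, q) → H.Adj (u, p) (v, q') → q = q')

/-- The subgraph of `Γ` induced on `R` is strictly `f`-degenerate: every nonempty
subgraph with vertices inside `R` has a vertex whose degree there is `< f`. -/
def StrictlyFDegenerateOn {α : Type u} (Γ : SimpleGraph α) (f : α → ℕ) (R : Set α) : Prop :=
  ∀ S : Set α, S ⊆ R → S.Nonempty → ∃ x ∈ S, (S ∩ {y | Γ.Adj x y}).ncard < f x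

/-- `R` is a transversal of a cover with fibres `X_v = {v} × Fin κ`. -/
def IsTransversal {V : Type u} {κ : ℕ} (R : Set (V × Fin κ)) : Prop :=
  ∀ v : V, ∃! p : Fin κ, (v, p) ∈ R

/-- `H` has a strictly `f`-degenerate transversal. -/
def HasSFDTransversal {V : Type u} {κ : ℕ} (H : SimpleGraph (V × Fin κ))
    (f : V × Fin κ → ℕ) : Prop :=
  ∃ R : Set (V × Fin κ), IsTransversal R ∧ StrictlyFDegenerateOn H f R

lemma acyclic_of_nbr_subsingleton {α : Type*} (Γ : SimpleGraph α)
    (h : ∀ x, (Γ.neighborSet x).Subsingleton) : Γ.IsAcyclic := by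
  have hpath : ∀ (a b : α) (q : Γ.Walk a b), q.IsPath → q.length ≤ 1 := by
    intro a b q hq
    cases q with
    | nil => simp
    | @cons _ c _ h1 q1 =>
      cases q1 with
      | @cons _ d _ h2 q2 =>
        exfalso
        have had : a = d := h c (by simpa using h1.symm) (by simpa using h2)
        have hns : a ∉ (SimpleGraph.Walk.cons h2 q2).support :=
          ((SimpleGraph.Walk.cons_isPath_iff _ _).mp hq).2
        exact hns (by rw [had]; simp)
      | nil => simp
  intro u p hp
  cases p with
  | nil => exact hp.ne_nil rfl
  | cons h q =>
    have h1 := ((SimpleGraph.Walk.cons_isCycle_iff q h).mp hp).1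
    have h2 := hp.three_le_length
    have := hpath _ _ q h1
    simp [SimpleGraph.Walk.length_cons] at h2
    omega

/-- Every graph with maximum degree `Δ` has linear list vertex
arboricity at most `⌈(Δ+1)/2⌉`: for every list assignment `L` with
`|L v| ≥ ⌈(Δ+1)/2⌉`, there is a coloring `φ` with `φ v ∈ L v` whose every color
class induces a forest of maximum degree at most two. -/
theorem linearListVertexArboricity_le
    {V : Type} [Fintype V] [DecidableEq V] (G : SimpleGraph V) [DecidableRel G.Adj]
    (Δ : ℕ) (hΔ : G.maxDegree = Δ)
    (L : V → Finset ℕ) (hL : ∀ v : V, (Δ + 2) / 2 ≤ (L v).card) :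
    ∃ φ : V → ℕ, (∀ v : V, φ v ∈ L v) ∧
      ∀ c : ℕ, (G.induce {v : V | φ v = c}).IsAcyclic ∧
        ∀ v : {v : V | φ v = c},
          ((G.induce {v : V | φ v = c}).neighborSet v).ncard ≤ 2 := by
  classical
  have hLne : ∀ v, (L v).Nonempty := fun v =>
    Finset.card_pos.mp (lt_of_lt_of_le (by omega) (hL v))
  set E : Finset (V × V) := Finset.univ.filter (fun e => G.Adj e.1 e.2) with hE
  set cost : (V → ℕ) → ℕ := fun θ => ∑ e ∈ E, (if θ e.1 = θ e.2 then 1 else 0) with hcost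
  have hex : ∃ n, ∃ θ : V → ℕ, (∀ v, θ v ∈ L v) ∧ cost θ = n :=
    ⟨_, fun v => (L v).min' (hLne v), fun v => (L v).min'_mem _, rfl⟩
  obtain ⟨φ, hφL, hφc⟩ := Nat.find_spec hex
  -- splitting the cost
  have hmap1 : ∀ v : V, E.filter (fun e => e.1 = v)
      = (G.neighborFinset v).map ⟨fun y => (v, y), fun a b h => by simpa using h⟩ := by
    intro v
    ext ⟨a, b⟩
    simp only [Finset.mem_filter, hE, Finset.mem_map, Finset.mem_univ, true_and,
      SimpleGraph.mem_neighborFinset, Function.Embedding.coeFn_mk, Prod.mk.injEq]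
    constructor
    · rintro ⟨hab, rfl⟩; exact ⟨b, hab, rfl⟩
    · rintro ⟨y, hy, h⟩; injection h with h1 h2; subst h1 h2; exact ⟨hy, rfl⟩
  have hmap2 : ∀ v : V, E.filter (fun e => ¬ e.1 = v ∧ e.2 = v)
      = (G.neighborFinset v).map ⟨fun y => (y, v), fun a b h => by simpa using h⟩ := by
    intro v
    ext ⟨a, b⟩
    simp only [Finset.mem_filter, hE, Finset.mem_map, Finset.mem_univ, true_and,
      SimpleGraph.mem_neighborFinset, Function.Embedding.coeFn_mk, Prod.mk.injEq]
    constructor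
    · rintro ⟨hab, _, rfl⟩; exact ⟨a, hab.symm, rfl⟩
    · rintro ⟨y, hy, h⟩; injection h with h1 h2; subst h1 h2; exact ⟨hy.symm, hy.symm.ne, rfl⟩
  have hsplit : ∀ (v : V) (θ : V → ℕ), cost θ =
      (∑ y ∈ G.neighborFinset v, if θ v = θ y then 1 else 0)
      + (∑ y ∈ G.neighborFinset v, if θ y = θ v then 1 else 0)
      + (∑ e ∈ E.filter (fun e => ¬ e.1 = v ∧ ¬ e.2 = v), if θ e.1 = θ e.2 then 1 else 0) := by
    intro v θ
    have e1 := Finset.sum_filter_add_sum_filter_not E (fun e => e.1 = v)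
      (fun e => if θ e.1 = θ e.2 then 1 else 0)
    have e2 := Finset.sum_filter_add_sum_filter_not (E.filter (fun e => ¬ e.1 = v))
      (fun e => e.2 = v) (fun e => if θ e.1 = θ e.2 then 1 else 0)
    have e3 : (E.filter (fun e => ¬ e.1 = v)).filter (fun e => e.2 = v)
        = E.filter (fun e => ¬ e.1 = v ∧ e.2 = v) := by
      ext e; simp only [Finset.mem_filter]; tauto
    have e4 : (E.filter (fun e => ¬ e.1 = v)).filter (fun e => ¬ e.2 = v)
        = E.filter (fun e => ¬ e.1 = v ∧ ¬ e.2 = v) := by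
      ext e; simp only [Finset.mem_filter]; tauto
    rw [e3, e4] at e2
    calc cost θ = ∑ e ∈ E, (if θ e.1 = θ e.2 then 1 else 0) := rfl
      _ = (∑ e ∈ E.filter (fun e => e.1 = v), if θ e.1 = θ e.2 then 1 else 0)
          + ∑ e ∈ E.filter (fun e => ¬ e.1 = v), if θ e.1 = θ e.2 then 1 else 0 := e1.symm
      _ = (∑ e ∈ E.filter (fun e => e.1 = v), if θ e.1 = θ e.2 then 1 else 0)
          + ((∑ e ∈ E.filter (fun e => ¬ e.1 = v ∧ e.2 = v), if θ e.1 = θ e.2 then 1 else 0)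
          + ∑ e ∈ E.filter (fun e => ¬ e.1 = v ∧ ¬ e.2 = v), if θ e.1 = θ e.2 then 1 else 0) := by
        rw [e2]
      _ = _ := by
        rw [hmap1 v, hmap2 v, Finset.sum_map, Finset.sum_map]
        exact (add_assoc _ _ _).symm
  -- key: every vertex has at most one neighbour of its own colour
  have key : ∀ v, (∑ y ∈ G.neighborFinset v, if φ v = φ y then 1 else 0) ≤ 1 := by
    intro v
    by_contra hcon
    push_neg at hcon
    have hdeg : (∑ y ∈ G.neighborFinset v, if φ y ∈ L v then 1 else 0) ≤ Δ := by
      calc (∑ y ∈ G.neighborFinset v, if φ y ∈ L v then 1 else 0)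
          ≤ ∑ _y ∈ G.neighborFinset v, 1 :=
            Finset.sum_le_sum (fun y _ => by split <;> omega)
        _ = G.degree v := (Finset.card_eq_sum_ones _).symm
        _ ≤ G.maxDegree := G.degree_le_maxDegree v
        _ = Δ := hΔ
    have hgood : ∃ c ∈ L v, (∑ y ∈ G.neighborFinset v, if φ y = c then 1 else 0) ≤ 1 := by
      by_contra hbad
      push_neg at hbad
      have hsum : Δ + 1 ≤ ∑ c ∈ L v, ∑ y ∈ G.neighborFinset v, (if φ y = c then 1 else 0) := by
        calc Δ + 1 ≤ 2 * ((Δ + 2) / 2) := by omega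
          _ ≤ 2 * (L v).card := by have := hL v; omega
          _ = ∑ _c ∈ L v, 2 := by rw [Finset.sum_const]; ring
          _ ≤ _ := Finset.sum_le_sum (fun c hc => hbad c hc)
      rw [Finset.sum_comm] at hsum
      simp_rw [Finset.sum_ite_eq (L v)] at hsum
      exact absurd (le_trans hsum hdeg) (by omega)
    obtain ⟨c, hcL, hc1⟩ := hgood
    set ψ : V → ℕ := Function.update φ v c with hψ
    have hψL : ∀ w, ψ w ∈ L w := by
      intro w
      by_cases hw : w = v
      · subst hw; simpa [hψ] using hcL
      · simpa [hψ, Function.update_of_ne hw] using hφL w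
    have hψv : ψ v = c := Function.update_self v c φ
    have hψn : ∀ y ∈ G.neighborFinset v, ψ y = φ y := by
      intro y hy
      have : y ≠ v := fun h => by
        rw [h] at hy; exact absurd hy (by simp)
      simp [hψ, Function.update_of_ne this]
    have hlt : cost ψ < cost φ := by
      rw [hsplit v ψ, hsplit v φ]
      have h3 : (∑ e ∈ E.filter (fun e => ¬ e.1 = v ∧ ¬ e.2 = v), if ψ e.1 = ψ e.2 then 1 else 0)
          = ∑ e ∈ E.filter (fun e => ¬ e.1 = v ∧ ¬ e.2 = v), if φ e.1 = φ e.2 then 1 else 0 := by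
        apply Finset.sum_congr rfl
        intro e he
        obtain ⟨_, h1, h2⟩ := Finset.mem_filter.mp he
        rw [hψ]
        rw [Function.update_of_ne h1, Function.update_of_ne h2]
      have h1 : (∑ y ∈ G.neighborFinset v, if ψ v = ψ y then 1 else 0)
          = ∑ y ∈ G.neighborFinset v, if φ y = c then 1 else 0 := by
        apply Finset.sum_congr rfl
        intro y hy
        rw [hψv, hψn y hy]
        exact if_congr eq_comm rfl rfl
      have h2 : (∑ y ∈ G.neighborFinset v, if ψ y = ψ v then 1 else 0)
          = ∑ y ∈ G.neighborFinset v, if φ y = c then 1 else 0 := by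
        apply Finset.sum_congr rfl
        intro y hy
        rw [hψv, hψn y hy]
      have h4 : (∑ y ∈ G.neighborFinset v, if φ y = φ v then 1 else 0)
          = ∑ y ∈ G.neighborFinset v, if φ v = φ y then 1 else 0 := by
        apply Finset.sum_congr rfl
        intro y _
        exact if_congr eq_comm rfl rfl
      rw [h1, h2, h3, h4]
      omega
    have := Nat.find_min hex (hφc ▸ hlt) ⟨ψ, hψL, rfl⟩
    exact this
  -- conclusion
  have key' : ∀ v, ((G.neighborFinset v).filter (fun y => φ v = φ y)).card ≤ 1 := by
    intro v
    rw [Finset.card_filter]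
    exact key v
  refine ⟨φ, hφL, fun c => ?_⟩
  have hsub : ∀ x : {v : V | φ v = c},
      ((G.induce {v : V | φ v = c}).neighborSet x).Subsingleton := by
    intro x y hy z hz
    have hy' : G.Adj ↑x ↑y := hy
    have hz' : G.Adj ↑x ↑z := hz
    have hxy : φ (↑x : V) = φ ↑y := by
      have h1 : φ (↑x : V) = c := x.prop
      have h2 : φ (↑y : V) = c := y.prop
      rw [h1, h2]
    have hxz : φ (↑x : V) = φ ↑z := by
      have h1 : φ (↑x : V) = c := x.prop
      have h2 : φ (↑z : V) = c := z.prop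
      rw [h1, h2]
    have m1 : (↑y : V) ∈ (G.neighborFinset ↑x).filter (fun w => φ ↑x = φ w) := by
      simp [hy', hxy]
    have m2 : (↑z : V) ∈ (G.neighborFinset ↑x).filter (fun w => φ ↑x = φ w) := by
      simp [hz', hxz]
    exact Subtype.ext (Finset.card_le_one.mp (key' ↑x) _ m1 _ m2)
  refine ⟨acyclic_of_nbr_subsingleton _ hsub, fun x => ?_⟩
  rcases (hsub x).eq_empty_or_singleton with h | ⟨a, h⟩
  · rw [h]; simp
  · rw [h]; simp [Set.ncard_singleton]
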